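/- Let (x_N)_{N∈ℕ} be a sequence in [0,1) with the following property: there exist s ∈ ℕ, positive real numbers K, γ, and infinitely many N ∈ ℕ such that the point set x_1,…,x_N has a subset with M ≥ γN elements which is contained in a finite point set in [0,1) of cardinality at most KN having at most s distinct gap lengths. Then (x_N)_{N∈ℕ} does not have Poissonian pair correlations. -/

import Mathlib

open Filter Set Asymptotics

/-- `nid x` is the distance from `x` to the nearest integer. -/
noncomputable def nid (x : ℝ) : ℝ := |x - round x|

/-- `pairCount x s N` is the pair counting function
`R(s,N) = #{(i,j) : 1 ≤ i ≠ j ≤ N, ‖x i - x j‖ ≤ s/N}`. -/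
noncomputable def pairCount (x : ℕ → ℝ) (s : ℝ) (N : ℕ) : ℕ :=
  {p : ℕ × ℕ | 1 ≤ p.1 ∧ p.1 ≤ N ∧ 1 ≤ p.2 ∧ p.2 ≤ N ∧ p.1 ≠ p.2 ∧
      nid (x p.1 - x p.2) ≤ s / N}.ncard

/-- The sequence `x` has `f`-pair correlations:
`R(s,N)/N → f s` for every `s ≥ 0`. -/
def HasPairCorr (x : ℕ → ℝ) (f : ℝ → ℝ) : Prop :=
  ∀ s : ℝ, 0 ≤ s →
    Tendsto (fun N : ℕ => (pairCount x s N : ℝ) / N) atTop (nhds (f s))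

/-- Given a (sorted) tuple `y : Fin N → ℝ`, the set of gap lengths: for every `i`
the torus distance between `y i` and its circular successor `y (i+1 mod N)`. -/
noncomputable def gapLengths {N : ℕ} (y : Fin N → ℝ) : Finset ℝ :=
  Finset.image (fun i : Fin N => nid (y (finRotate N i) - y i)) Finset.univ

/-- The point set `x 1, …, x N` has at most `k` distinct gap lengths: after sorting
the points (by a permutation `σ`), the distances (w.r.t. the torus metric) between
circularly consecutive elements take at most `k` distinct values. -/
noncomputable def AtMostGaps (x : ℕ → ℝ) (N k : ℕ) : Prop :=
  ∃ σ : Equiv.Perm (Fin N), Monotone (fun i : Fin N => x ((σ i : ℕ) + 1)) ∧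
    (gapLengths (fun i : Fin N => x ((σ i : ℕ) + 1))).card ≤ k

/-- A finite point set `Y ⊆ [0,1)` has at most `k` distinct gap lengths: the distances
(w.r.t. the torus metric) between circularly consecutive elements of its sorted
enumeration take at most `k` distinct values. -/
noncomputable def FinsetAtMostGaps (Y : Finset ℝ) (k : ℕ) : Prop :=
  (gapLengths (fun i : Fin Y.card => ((Y.orderIsoOfFin rfl i : ℝ)))).card ≤ k

lemma nid_nonneg (t : ℝ) : 0 ≤ nid t := abs_nonneg _

lemma nid_eq_self {t : ℝ} (h0 : 0 ≤ t) (h2 : t ≤ 1/2) : nid t = t := by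
  rcases lt_or_eq_of_le h2 with h | h
  · have : round t = 0 := round_eq_zero_iff.2 ⟨by linarith, h⟩
    simp [nid, this, abs_of_nonneg h0]
  · subst h
    have : round (1/2 : ℝ) = 1 := by norm_num [round_eq]
    norm_num [nid, this]

noncomputable def sumsUpTo (G : Finset ℝ) : ℕ → Finset ℝ
  | 0 => {0}
  | k+1 => sumsUpTo G k ∪ Finset.image₂ (· + ·) G (sumsUpTo G k)

lemma zero_mem_sumsUpTo (G : Finset ℝ) (k : ℕ) : (0:ℝ) ∈ sumsUpTo G k := by
  induction k with
  | zero => simp [sumsUpTo]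
  | succ k ih => simp [sumsUpTo]; left; exact ih

lemma add_mem_sumsUpTo {G : Finset ℝ} {g t : ℝ} {k : ℕ} (hg : g ∈ G)
    (ht : t ∈ sumsUpTo G k) : g + t ∈ sumsUpTo G (k+1) := by
  simp only [sumsUpTo, Finset.mem_union]
  right
  exact Finset.mem_image₂.2 ⟨g, hg, t, ht, rfl⟩

lemma sumsUpTo_subset_succ (G : Finset ℝ) (k : ℕ) :
    sumsUpTo G k ⊆ sumsUpTo G (k+1) := by
  intro a ha; simp only [sumsUpTo, Finset.mem_union]; left; exact ha

lemma sumsUpTo_mono (G : Finset ℝ) {k l : ℕ} (h : k ≤ l) :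
    sumsUpTo G k ⊆ sumsUpTo G l := by
  induction l with
  | zero => simpa [Nat.le_zero.1 h]
  | succ l ih =>
    rcases Nat.lt_or_ge k (l+1) with h' | h'
    · exact (ih (Nat.lt_succ_iff.1 h')).trans (sumsUpTo_subset_succ G l)
    · have : k = l+1 := le_antisymm h h'
      subst this; exact subset_rfl

lemma card_sumsUpTo (G : Finset ℝ) (k : ℕ) :
    (sumsUpTo G k).card ≤ (G.card + 1)^k := by
  induction k with
  | zero => simp [sumsUpTo]
  | succ k ih =>
    calc (sumsUpTo G (k+1)).card
        ≤ (sumsUpTo G k).card + (Finset.image₂ (· + ·) G (sumsUpTo G k)).card :=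
          Finset.card_union_le _ _
      _ ≤ (sumsUpTo G k).card + G.card * (sumsUpTo G k).card := by
          gcongr; exact Finset.card_image₂_le _ _ _
      _ = (G.card + 1) * (sumsUpTo G k).card := by ring
      _ ≤ (G.card + 1) * (G.card + 1)^k := by gcongr
      _ = (G.card + 1)^(k+1) := by ring

lemma gapsum {n : ℕ} (w : Fin n → ℝ) (hw : Monotone w) (k : ℕ) :
    ∀ a b : Fin n, (a:ℕ) + k = (b:ℕ) → w b - w a ≤ 1/2 →
    w b - w a ∈ sumsUpTo (gapLengths w) k := by
  induction k with
  | zero =>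
    intro a b hab _
    have : a = b := Fin.ext (by omega)
    subst this
    simpa using zero_mem_sumsUpTo _ 0
  | succ k ih =>
    intro a b hab h2
    have han : (a:ℕ) + 1 < n := by have := b.isLt; omega
    set a' : Fin n := ⟨(a:ℕ)+1, han⟩ with ha'
    obtain ⟨m, rfl⟩ : ∃ m, n = m+1 := ⟨n-1, by omega⟩
    have hrot : finRotate (m+1) a = a' := by
      rw [finRotate_succ_apply]
      apply Fin.ext
      rw [Fin.val_add_one_of_lt]
      exact Fin.lt_last_iff_ne_last.2 (by
        intro hcon
        have : (a:ℕ) = m := by rw [hcon]; rfl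
        omega)
    have hab' : w a ≤ w a' := hw (by simp [Fin.le_def, ha'])
    have ha'b : w a' ≤ w b := hw (by simp [Fin.le_def, ha']; omega)
    have hg : w a' - w a ∈ gapLengths w := by
      have : nid (w (finRotate (m+1) a) - w a) ∈ gapLengths w :=
        Finset.mem_image.2 ⟨a, Finset.mem_univ _, rfl⟩
      rwa [hrot, nid_eq_self (by linarith) (by linarith)] at this
    have hrest : w b - w a' ∈ sumsUpTo (gapLengths w) k :=
      ih a' b (by simp [ha']; omega) (by linarith)
    have : w b - w a = (w a' - w a) + (w b - w a') := by ring
    rw [this]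
    exact add_mem_sumsUpTo hg hrest

set_option maxHeartbeats 2000000 in
lemma core (x : ℕ → ℝ) (s : ℕ) (K γ : ℝ) (hK : 0 < K) (hγ : 0 < γ)
    (N : ℕ) (hN : 12 ≤ γ * N)
    (J : Finset ℕ) (Y : Finset ℝ)
    (hJ1 : J ⊆ Finset.Icc 1 N) (hJ2 : γ * N ≤ (J.card : ℝ))
    (hY1 : (Y : Set ℝ) ⊆ Ico (0:ℝ) 1) (hY2 : (Y.card : ℝ) ≤ K * N)
    (hY3 : FinsetAtMostGaps Y s) (hJY : ∀ j ∈ J, x j ∈ Y) :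
    ∃ (d : ℝ) (P : Finset (ℕ × ℕ)),
      0 ≤ d ∧ d * N ≤ 6/γ ∧
      γ / (12 * ((s+1:ℕ):ℝ)^(⌈6*K/γ⌉₊)) * N ≤ (P.card : ℝ) ∧
      ∀ p ∈ P, 1 ≤ p.1 ∧ p.1 ≤ N ∧ 1 ≤ p.2 ∧ p.2 ≤ N ∧ p.1 ≠ p.2 ∧
        nid (x p.1 - x p.2) = d := by
  set h : ℕ := ⌈6*K/γ⌉₊ with hh
  have hNpos : 0 < N := by
    rcases Nat.eq_zero_or_pos N with h0 | h0
    · rw [h0] at hN; norm_num at hN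
    · exact h0
  have hNR : (1:ℝ) ≤ N := by exact_mod_cast hNpos
  have hpow1 : (1:ℝ) ≤ ((s+1:ℕ):ℝ)^h := one_le_pow₀ (by exact_mod_cast Nat.succ_le_succ (Nat.zero_le s))
  have hc0pos : 0 < γ / (12 * ((s+1:ℕ):ℝ)^h) := by positivity
  set n := Y.card with hn
  set w : Fin n → ℝ := fun i => ((Y.orderIsoOfFin rfl i : ℝ)) with hwdef
  have hwsm : StrictMono w := by
    intro i j hij
    exact Subtype.coe_lt_coe.2 ((Y.orderIsoOfFin rfl).strictMono hij)
  have hwmono : Monotone w := hwsm.monotone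
  have hwmem : ∀ i, w i ∈ Y := fun i => (Y.orderIsoOfFin rfl i).2
  have hwsurj : ∀ y ∈ Y, ∃ i, w i = y := by
    intro y hy
    exact ⟨(Y.orderIsoOfFin rfl).symm ⟨y, hy⟩,
      congrArg Subtype.val ((Y.orderIsoOfFin rfl).apply_symm_apply ⟨y, hy⟩)⟩
  set G := gapLengths w with hGdef
  have hG : G.card ≤ s := hY3
  -- J is nonempty, hence Y is nonempty
  have hJne : J.Nonempty := by
    rw [← Finset.card_pos, ← Nat.cast_pos (α := ℝ)]
    nlinarith [hJ2]
  have hnpos : 0 < n := by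
    obtain ⟨j, hj⟩ := hJne
    have := hJY j hj
    rw [hn, Finset.card_pos]
    exact ⟨x j, this⟩
  have hFinNe : Nonempty (Fin n) := ⟨⟨0, hnpos⟩⟩
  set pos : ℕ → Fin n := fun j => if hex : ∃ i, w i = x j then hex.choose else Classical.arbitrary _ with hposdef
  have hpos : ∀ j ∈ J, w (pos j) = x j := by
    intro j hj
    have hex : ∃ i, w i = x j := hwsurj _ (hJY j hj)
    simp only [hposdef, dif_pos hex]
    exact hex.choose_spec
  set Q : Finset (Fin n) := J.image pos with hQdef
  set q := Q.card with hq
  set rep : Fin n → ℕ := fun i => if hex : ∃ j ∈ J, pos j = i then hex.choose else 0 with hrepdef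
  have hrep : ∀ i ∈ Q, rep i ∈ J ∧ pos (rep i) = i := by
    intro i hi
    obtain ⟨j, hj, hji⟩ := Finset.mem_image.1 hi
    have hex : ∃ j ∈ J, pos j = i := ⟨j, hj, hji⟩
    simp only [hrepdef, dif_pos hex]
    exact hex.choose_spec
  have hrepx : ∀ i ∈ Q, x (rep i) = w i := by
    intro i hi
    have h2 := hpos _ (hrep i hi).1
    rw [(hrep i hi).2] at h2
    exact h2.symm
  rcases le_or_gt (2*q) J.card with hcase | hcase
  · -- Case A: many coincidences, take d = 0
    set J' := J.filter (fun j => rep (pos j) ≠ j) with hJ'def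
    have hsub : J \ J' ⊆ Q.image rep := by
      intro j hj
      rw [Finset.mem_sdiff] at hj
      obtain ⟨hjJ, hjn⟩ := hj
      rw [hJ'def, Finset.mem_filter] at hjn
      push_neg at hjn
      exact Finset.mem_image.2 ⟨pos j, Finset.mem_image.2 ⟨j, hjJ, rfl⟩, hjn hjJ⟩
    have hcard1 : J.card ≤ J'.card + q := by
      calc J.card ≤ (J' ∪ (J \ J')).card := Finset.card_le_card (by
            intro j hj
            by_cases hj' : j ∈ J'
            · exact Finset.mem_union_left _ hj'
            · exact Finset.mem_union_right _ (Finset.mem_sdiff.2 ⟨hj, hj'⟩))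
        _ ≤ J'.card + (J \ J').card := Finset.card_union_le _ _
        _ ≤ J'.card + (Q.image rep).card := Nat.add_le_add_left (Finset.card_le_card hsub) _
        _ ≤ J'.card + q := Nat.add_le_add_left Finset.card_image_le _
    refine ⟨0, J'.image (fun j => (j, rep (pos j))), le_refl 0, by rw [zero_mul]; positivity, ?_, ?_⟩
    · rw [Finset.card_image_of_injOn (fun a _ b _ hab => congrArg Prod.fst hab)]
      have h1 : (J.card : ℝ) ≤ (J'.card : ℝ) + q := by exact_mod_cast hcard1
      have h2 : 2*(q : ℝ) ≤ J.card := by exact_mod_cast hcase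
      have hp : γ/(12 * ((s+1:ℕ):ℝ)^h) ≤ γ/12 :=
        div_le_div_of_nonneg_left hγ.le (by norm_num) (by nlinarith)
      nlinarith [hJ2, hNR, hγ.le]
    · intro p hp
      obtain ⟨j, hjJ', rfl⟩ := Finset.mem_image.1 hp
      rw [hJ'def, Finset.mem_filter] at hjJ'
      obtain ⟨hjJ, hjne⟩ := hjJ'
      have hposQ : pos j ∈ Q := Finset.mem_image.2 ⟨j, hjJ, rfl⟩
      have hrj : rep (pos j) ∈ J := (hrep _ hposQ).1
      obtain ⟨hj1, hj2⟩ := Finset.mem_Icc.1 (hJ1 hjJ)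
      obtain ⟨hr1, hr2⟩ := Finset.mem_Icc.1 (hJ1 hrj)
      refine ⟨hj1, hj2, hr1, hr2, fun hcon => hjne hcon.symm, ?_⟩
      have : x (rep (pos j)) = x j := by rw [hrepx _ hposQ, hpos _ hjJ]
      simp [this, nid]
  · -- Case B: many distinct values
    have hqR : γ * N / 2 < (q:ℝ) := by
      have h2 : (J.card : ℝ) < 2*(q:ℝ) := by exact_mod_cast hcase
      linarith
    have hq1 : 0 < q := by
      rw [← Nat.cast_pos (α := ℝ)]
      nlinarith
    set v : Fin q → Fin n := fun t => (Q.orderIsoOfFin rfl t : Fin n) with hvdef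
    have hvsm : StrictMono v := fun i j hij =>
      Subtype.coe_lt_coe.2 ((Q.orderIsoOfFin rfl).strictMono hij)
    have hvQ : ∀ t, v t ∈ Q := fun t => (Q.orderIsoOfFin rfl t).2
    set u : ℕ → Fin n := fun t => v ⟨min t (q-1), by omega⟩ with hudef
    have humono : Monotone u := by
      intro a b hab
      exact hvsm.monotone (show (⟨min a (q-1), by omega⟩ : Fin q) ≤ ⟨min b (q-1), by omega⟩ by
        simp only [Fin.mk_le_mk]; omega)
    have huQ : ∀ t, u t ∈ Q := fun t => hvQ _
    set D : ℕ → ℝ := fun t => w (u (t+1)) - w (u t) with hDdef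
    have hD0 : ∀ t, 0 ≤ D t := fun t => sub_nonneg.2 (hwmono (humono (Nat.le_succ t)))
    set step : ℕ → ℕ := fun t => (u (t+1) : ℕ) - (u t : ℕ) with hstepdef
    have hsumD : ∑ t ∈ Finset.range (q-1), D t ≤ 1 := by
      rw [hDdef, Finset.sum_range_sub (fun t => w (u t))]
      have h1 := (hY1 (Finset.mem_coe.2 (hwmem (u (q-1))))).2
      have h2 := (hY1 (Finset.mem_coe.2 (hwmem (u 0)))).1
      linarith
    have hsumStep : ∑ t ∈ Finset.range (q-1), step t ≤ n := by
      rw [hstepdef, Finset.sum_range_tsub (f := fun t => ((u t : ℕ)))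
        (fun a b hab => Fin.le_def.1 (humono hab))]
      have := (u (q-1)).isLt
      omega
    set Bad1 := (Finset.range (q-1)).filter (fun t => h + 1 ≤ step t) with hB1def
    have hB1card : (Bad1.card : ℝ) ≤ γ * N / 6 := by
      have h1 : Bad1.card * (h+1) ≤ ∑ t ∈ Bad1, step t := by
        have := Finset.card_nsmul_le_sum Bad1 step (h+1)
          (fun t ht => (Finset.mem_filter.1 ht).2)
        simpa [smul_eq_mul] using this
      have h2 : ∑ t ∈ Bad1, step t ≤ ∑ t ∈ Finset.range (q-1), step t :=
        Finset.sum_le_sum_of_subset (Finset.filter_subset _ _)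
      have h3 : (Bad1.card : ℝ) * ((h:ℝ)+1) ≤ (n:ℝ) := by
        exact_mod_cast le_trans h1 (le_trans h2 hsumStep)
      have hh1 : 6*K ≤ γ * ((h:ℝ)+1) := by
        have hcl : 6*K/γ ≤ (h:ℝ) := by rw [hh]; exact Nat.le_ceil _
        rw [div_le_iff₀ hγ] at hcl
        nlinarith
      have hB0 : (0:ℝ) ≤ (Bad1.card : ℝ) := Nat.cast_nonneg _
      set B : ℝ := (Bad1.card : ℝ) with hBdef
      rw [le_div_iff₀ (by norm_num : (0:ℝ) < 6)]
      have e1 : γ * (B*((h:ℝ)+1)) ≤ γ * (K*N) :=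
        mul_le_mul_of_nonneg_left (le_trans h3 hY2) hγ.le
      have e2 : (6*K)*B ≤ (γ*((h:ℝ)+1))*B := mul_le_mul_of_nonneg_right hh1 hB0
      have e4 : (B*6)*K ≤ (γ*(N:ℝ))*K := by
        calc (B*6)*K = (6*K)*B := by ring
          _ ≤ (γ*((h:ℝ)+1))*B := e2
          _ = γ*(B*((h:ℝ)+1)) := by ring
          _ ≤ γ*(K*N) := e1
          _ = (γ*N)*K := by ring
      exact le_of_mul_le_mul_right e4 hK
    set Bad2 := (Finset.range (q-1)).filter (fun t => 6/γ/N < D t) with hB2def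
    have hB2card : (Bad2.card : ℝ) ≤ γ * N / 6 := by
      have h1 : (Bad2.card : ℝ) * (6/γ/N) ≤ ∑ t ∈ Bad2, D t := by
        have := Finset.card_nsmul_le_sum Bad2 D (6/γ/N)
          (fun t ht => le_of_lt (Finset.mem_filter.1 ht).2)
        simpa [nsmul_eq_mul] using this
      have h2 : ∑ t ∈ Bad2, D t ≤ ∑ t ∈ Finset.range (q-1), D t :=
        Finset.sum_le_sum_of_subset_of_nonneg (Finset.filter_subset _ _)
          (fun t _ _ => hD0 t)
      have key : (Bad2.card:ℝ) * (6/γ/N) ≤ 1 := le_trans h1 (le_trans h2 hsumD)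
      have hpos : (0:ℝ) < γ * N := by nlinarith
      rw [div_div, ← mul_div_assoc] at key
      rw [div_le_one hpos] at key
      linarith
    set Good := (Finset.range (q-1)) \ (Bad1 ∪ Bad2) with hGooddef
    have hGoodcard : γ * N / 12 ≤ (Good.card : ℝ) := by
      have hsplit : (Finset.range (q-1)).card ≤ Good.card + (Bad1.card + Bad2.card) := by
        calc (Finset.range (q-1)).card ≤ (Good ∪ (Bad1 ∪ Bad2)).card :=
              Finset.card_le_card (by
                intro t ht
                by_cases hmem : t ∈ Bad1 ∪ Bad2
                · exact Finset.mem_union_right _ hmem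
                · exact Finset.mem_union_left _ (Finset.mem_sdiff.2 ⟨ht, hmem⟩))
          _ ≤ Good.card + (Bad1 ∪ Bad2).card := Finset.card_union_le _ _
          _ ≤ Good.card + (Bad1.card + Bad2.card) :=
              Nat.add_le_add_left (Finset.card_union_le _ _) _
      have hrange : ((q:ℝ) - 1) ≤ ((Finset.range (q-1)).card : ℝ) := by
        rw [Finset.card_range]
        rw [Nat.cast_sub hq1]
        norm_num
      have hsplit' : ((Finset.range (q-1)).card : ℝ) ≤
          (Good.card:ℝ) + ((Bad1.card:ℝ) + (Bad2.card:ℝ)) := by exact_mod_cast hsplit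
      linarith
    have hmemGood : ∀ t ∈ Good, t ∈ Finset.range (q-1) ∧ t ∉ Bad1 ∧ t ∉ Bad2 := by
      intro t ht
      obtain ⟨h1, h2⟩ := Finset.mem_sdiff.1 ht
      rw [Finset.mem_union] at h2
      push_neg at h2
      exact ⟨h1, h2.1, h2.2⟩
    have hDle : ∀ t ∈ Good, D t ≤ 6/γ/N := by
      intro t ht
      obtain ⟨h1, _, h3⟩ := hmemGood t ht
      rw [hB2def, Finset.mem_filter] at h3
      push_neg at h3
      exact h3 h1
    have hstep_le : ∀ t ∈ Good, step t ≤ h := by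
      intro t ht
      obtain ⟨h1, h2, _⟩ := hmemGood t ht
      rw [hB1def, Finset.mem_filter] at h2
      push_neg at h2
      have := h2 h1
      omega
    have hhalf : 6/γ/N ≤ 1/2 := by
      rw [div_div, div_le_iff₀ (by nlinarith)]
      nlinarith
    have hDmem : ∀ t ∈ Good, D t ∈ sumsUpTo G h := by
      intro t ht
      have hle : (u t : ℕ) ≤ (u (t+1) : ℕ) := Fin.le_def.1 (humono (Nat.le_succ t))
      have h1 : ((u t : ℕ)) + step t = ((u (t+1) : ℕ)) := by
        simp only [hstepdef]; omega
      have h2 := gapsum w hwmono (step t) (u t) (u (t+1)) h1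
        (le_trans (hDle t ht) hhalf)
      exact sumsUpTo_mono G (hstep_le t ht) h2
    set S := sumsUpTo G h with hSdef
    have hSne : S.Nonempty := ⟨0, zero_mem_sumsUpTo G h⟩
    have hSpos : (0:ℝ) < S.card := by exact_mod_cast Finset.card_pos.2 hSne
    have hScard : (S.card : ℝ) ≤ ((s+1:ℕ):ℝ)^h := by
      have h1 : S.card ≤ (G.card + 1)^h := card_sumsUpTo G h
      have h2 : (G.card + 1)^h ≤ (s+1)^h := Nat.pow_le_pow_left (by omega) h
      exact_mod_cast le_trans h1 h2
    have hfib : ∃ d ∈ S, (Good.card : ℝ)/(S.card:ℝ) ≤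
        ((Good.filter (fun t => D t = d)).card : ℝ) := by
      have hcardsum : Good.card = ∑ d ∈ S, (Good.filter (fun t => D t = d)).card :=
        Finset.card_eq_sum_card_fiberwise hDmem
      by_contra hcon
      push_neg at hcon
      have hlt : ∑ d ∈ S, ((Good.filter (fun t => D t = d)).card:ℝ) <
          ∑ _d ∈ S, (Good.card:ℝ)/(S.card:ℝ) :=
        Finset.sum_lt_sum_of_nonempty hSne (fun d hd => hcon d hd)
      rw [Finset.sum_const, nsmul_eq_mul, mul_div_cancel₀ _ (ne_of_gt hSpos)] at hlt
      have : ((Good.card:ℕ):ℝ) = ∑ d ∈ S, ((Good.filter (fun t => D t = d)).card:ℝ) := by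
        exact_mod_cast congrArg (Nat.cast (R := ℝ)) hcardsum
      linarith
    obtain ⟨d, hdS, hdfib⟩ := hfib
    set F := Good.filter (fun t => D t = d) with hFdef
    have hFcard : γ / (12 * ((s+1:ℕ):ℝ)^h) * N ≤ (F.card:ℝ) := by
      have h1 : (Good.card:ℝ)/(((s+1:ℕ):ℝ)^h) ≤ (Good.card:ℝ)/(S.card:ℝ) :=
        div_le_div_of_nonneg_left (Nat.cast_nonneg _) hSpos hScard
      calc γ / (12 * ((s+1:ℕ):ℝ)^h) * N = (γ*N/12)/(((s+1:ℕ):ℝ)^h) := by ring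
        _ ≤ (Good.card:ℝ)/(((s+1:ℕ):ℝ)^h) := by gcongr
        _ ≤ (Good.card:ℝ)/(S.card:ℝ) := h1
        _ ≤ (F.card:ℝ) := hdfib
    have hFne : F.Nonempty := by
      rw [← Finset.card_pos, ← Nat.cast_pos (α := ℝ)]
      calc (0:ℝ) < γ / (12 * ((s+1:ℕ):ℝ)^h) * N := by positivity
        _ ≤ _ := hFcard
    obtain ⟨t₀, ht₀⟩ := hFne
    have hd_eq : D t₀ = d := (Finset.mem_filter.1 ht₀).2
    have hd0 : 0 ≤ d := hd_eq ▸ hD0 t₀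
    have hdle : d ≤ 6/γ/N := hd_eq ▸ hDle t₀ (Finset.mem_filter.1 ht₀).1
    refine ⟨d, F.image (fun t => (rep (u (t+1)), rep (u t))), hd0, ?_, ?_, ?_⟩
    · have h1 : d * N ≤ (6/γ/N) * N := mul_le_mul_of_nonneg_right hdle (Nat.cast_nonneg _)
      rwa [div_mul_cancel₀ _ (show ((N:ℝ)) ≠ 0 by positivity)] at h1
    · rw [Finset.card_image_of_injOn ?_]
      · exact hFcard
      · intro a ha b hb hab
        have h2 : rep (u a) = rep (u b) := congrArg Prod.snd hab
        have h3 : w (u a) = w (u b) := by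
          rw [← hrepx _ (huQ a), ← hrepx _ (huQ b), h2]
        have huab : u a = u b := hwsm.injective h3
        have haq : a < q-1 := Finset.mem_range.1 (hmemGood a (Finset.mem_filter.1 ha).1).1
        have hbq : b < q-1 := Finset.mem_range.1 (hmemGood b (Finset.mem_filter.1 hb).1).1
        have h4 := hvsm.injective huab
        rw [Fin.mk.injEq] at h4
        omega
    · intro p hp
      obtain ⟨t, htF, rfl⟩ := Finset.mem_image.1 hp
      have htG := (Finset.mem_filter.1 htF).1
      have htq : t < q-1 := Finset.mem_range.1 (hmemGood t htG).1
      have hmem1 : rep (u (t+1)) ∈ J := (hrep _ (huQ (t+1))).1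
      have hmem2 : rep (u t) ∈ J := (hrep _ (huQ t)).1
      obtain ⟨ha1, ha2⟩ := Finset.mem_Icc.1 (hJ1 hmem1)
      obtain ⟨hb1, hb2⟩ := Finset.mem_Icc.1 (hJ1 hmem2)
      have hlt : w (u t) < w (u (t+1)) := by
        apply hwsm
        apply hvsm
        rw [Fin.mk_lt_mk]
        omega
      refine ⟨ha1, ha2, hb1, hb2, ?_, ?_⟩
      · intro hcon
        have : x (rep (u (t+1))) = x (rep (u t)) := congrArg x hcon
        rw [hrepx _ (huQ (t+1)), hrepx _ (huQ t)] at this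
        exact absurd this (ne_of_gt hlt)
      · show nid (x (rep (u (t+1))) - x (rep (u t))) = d
        have hxx : x (rep (u (t+1))) - x (rep (u t)) = D t := by
          rw [hrepx _ (huQ (t+1)), hrepx _ (huQ t), hDdef]
        rw [hxx, nid_eq_self (hD0 t) (le_trans (hDle t htG) hhalf)]
        exact (Finset.mem_filter.1 htF).2

lemma pairSet_finite (x : ℕ → ℝ) (s : ℝ) (N : ℕ) :
    {p : ℕ × ℕ | 1 ≤ p.1 ∧ p.1 ≤ N ∧ 1 ≤ p.2 ∧ p.2 ≤ N ∧ p.1 ≠ p.2 ∧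
      nid (x p.1 - x p.2) ≤ s / N}.Finite := by
  apply Set.Finite.subset ((Finset.Icc 1 N ×ˢ Finset.Icc 1 N).finite_toSet)
  intro p hp
  simp only [Finset.coe_product, Set.mem_prod, Finset.mem_coe, Finset.mem_Icc]
  exact ⟨⟨hp.1, hp.2.1⟩, ⟨hp.2.2.1, hp.2.2.2.1⟩⟩

lemma pairCount_jump (x : ℕ → ℝ) {N : ℕ} (hN : 0 < N) {d α β : ℝ}
    (hα : α < d * N) (hβ : d * N ≤ β) {P : Finset (ℕ × ℕ)}
    (hP : ∀ p ∈ P, 1 ≤ p.1 ∧ p.1 ≤ N ∧ 1 ≤ p.2 ∧ p.2 ≤ N ∧ p.1 ≠ p.2 ∧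
      nid (x p.1 - x p.2) = d) :
    pairCount x α N + P.card ≤ pairCount x β N := by
  have hNR : (0:ℝ) < N := by exact_mod_cast hN
  set A := {p : ℕ × ℕ | 1 ≤ p.1 ∧ p.1 ≤ N ∧ 1 ≤ p.2 ∧ p.2 ≤ N ∧ p.1 ≠ p.2 ∧
      nid (x p.1 - x p.2) ≤ α / N} with hA
  set B := {p : ℕ × ℕ | 1 ≤ p.1 ∧ p.1 ≤ N ∧ 1 ≤ p.2 ∧ p.2 ≤ N ∧ p.1 ≠ p.2 ∧
      nid (x p.1 - x p.2) ≤ β / N} with hB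
  have hdβ : d ≤ β / N := (le_div_iff₀ hNR).2 hβ
  have hdα : α / N < d := (div_lt_iff₀ hNR).2 hα
  have hPB : ↑P ⊆ B := by
    intro p hp
    obtain ⟨h1, h2, h3, h4, h5, h6⟩ := hP p (Finset.mem_coe.1 hp)
    exact ⟨h1, h2, h3, h4, h5, h6 ▸ hdβ⟩
  have hAB : A ⊆ B := by
    intro p hp
    obtain ⟨h1, h2, h3, h4, h5, h6⟩ := hp
    refine ⟨h1, h2, h3, h4, h5, h6.trans (le_trans (le_of_lt hdα) hdβ)⟩
  have hdisj : Disjoint (↑P : Set (ℕ × ℕ)) A := by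
    rw [Set.disjoint_left]
    intro p hp hpA
    have h6 := (hP p (Finset.mem_coe.1 hp)).2.2.2.2.2
    have := hpA.2.2.2.2.2
    rw [h6] at this
    exact absurd this (not_le.2 hdα)
  have hBfin : B.Finite := pairSet_finite x β N
  calc pairCount x α N + P.card = (A ∪ ↑P).ncard := by
        rw [Set.ncard_union_eq hdisj.symm (hBfin.subset hAB) P.finite_toSet,
          Set.ncard_coe_finset]
        rfl
    _ ≤ B.ncard := Set.ncard_le_ncard (Set.union_subset hAB hPB) hBfin
    _ = pairCount x β N := rfl

lemma pairCount_zero_lb (x : ℕ → ℝ) {N : ℕ} {P : Finset (ℕ × ℕ)}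
    (hP : ∀ p ∈ P, 1 ≤ p.1 ∧ p.1 ≤ N ∧ 1 ≤ p.2 ∧ p.2 ≤ N ∧ p.1 ≠ p.2 ∧
      nid (x p.1 - x p.2) = 0) :
    P.card ≤ pairCount x 0 N := by
  have hPB : ↑P ⊆ {p : ℕ × ℕ | 1 ≤ p.1 ∧ p.1 ≤ N ∧ 1 ≤ p.2 ∧ p.2 ≤ N ∧ p.1 ≠ p.2 ∧
      nid (x p.1 - x p.2) ≤ 0 / N} := by
    intro p hp
    obtain ⟨h1, h2, h3, h4, h5, h6⟩ := hP p (Finset.mem_coe.1 hp)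
    exact ⟨h1, h2, h3, h4, h5, by rw [h6, zero_div]⟩
  calc P.card = (↑P : Set (ℕ × ℕ)).ncard := (Set.ncard_coe_finset P).symm
    _ ≤ _ := Set.ncard_le_ncard hPB (pairSet_finite x 0 N)

lemma no_freq {f : ℕ → ℝ} {L c : ℝ} (hf : Tendsto f atTop (nhds L)) (hc : L < c)
    (hs : {N : ℕ | c ≤ f N}.Infinite) : False := by
  have hev := hf.eventually_lt_const hc
  rw [eventually_atTop] at hev
  obtain ⟨M, hM⟩ := hev
  obtain ⟨N, hN, hNM⟩ := hs.exists_gt M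
  exact absurd (hM N hNM.le) (not_lt.2 hN)

/-- (Larcher–Stockinger) If there are `s ∈ ℕ`, positive reals `K, γ`
and infinitely many `N` such that among `x 1, …, x N` there is a subset of at least
`γN` elements contained in a finite point set of cardinality at most `KN` having at
most `s` distinct gap lengths, then `x` does not have Poissonian pair correlations. -/
theorem statement2 (x : ℕ → ℝ) (hx : ∀ n, x n ∈ Ico (0 : ℝ) 1)
    (h : ∃ (s : ℕ) (K γ : ℝ), 0 < K ∧ 0 < γ ∧
      {N : ℕ | ∃ (J : Finset ℕ) (Y : Finset ℝ),
          J ⊆ Finset.Icc 1 N ∧ γ * N ≤ (J.card : ℝ) ∧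
          (Y : Set ℝ) ⊆ Ico (0 : ℝ) 1 ∧ (Y.card : ℝ) ≤ K * N ∧
          FinsetAtMostGaps Y s ∧ ∀ j ∈ J, x j ∈ Y}.Infinite) :
    ¬ HasPairCorr x (fun s => 2 * s) := by
  intro hPPC
  obtain ⟨s, K, γ, hK, hγ, hInf⟩ := h
  have hpow1 : (1:ℝ) ≤ ((s+1:ℕ):ℝ)^(⌈6*K/γ⌉₊) :=
    one_le_pow₀ (by exact_mod_cast Nat.succ_le_succ (Nat.zero_le s))
  set c₀ : ℝ := γ / (12 * ((s+1:ℕ):ℝ)^(⌈6*K/γ⌉₊)) with hc₀def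
  have hc₀ : 0 < c₀ := by
    apply div_pos hγ
    nlinarith
  set δ : ℝ := c₀/4 with hδdef
  have hδ : 0 < δ := by positivity
  have hNposs : ∀ N : ℕ, 12 ≤ γ * N → 0 < N := by
    intro N hN12
    rcases Nat.eq_zero_or_pos N with rfl | hp
    · norm_num at hN12
    · exact hp
  have hsmall : {N : ℕ | ¬ (12 ≤ γ * (N:ℝ))}.Finite := by
    apply Set.Finite.subset (Set.finite_Iio (⌈(12:ℝ)/γ⌉₊ + 1))
    intro N hN
    simp only [Set.mem_setOf_eq, not_le] at hN
    simp only [Set.mem_Iio]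
    have h1 : (N:ℝ) < 12/γ := by
      rw [lt_div_iff₀ hγ]; linarith [hN, mul_comm γ (N:ℝ)]
    have h2 : (N:ℝ) ≤ (⌈(12:ℝ)/γ⌉₊ : ℝ) := le_trans h1.le (Nat.le_ceil _)
    have h3 : N ≤ ⌈(12:ℝ)/γ⌉₊ := by exact_mod_cast h2
    omega
  set 𝒩 : Set ℕ := {N : ℕ | ∃ (J : Finset ℕ) (Y : Finset ℝ),
      J ⊆ Finset.Icc 1 N ∧ γ * N ≤ (J.card : ℝ) ∧
      (Y : Set ℝ) ⊆ Ico (0 : ℝ) 1 ∧ (Y.card : ℝ) ≤ K * N ∧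
      FinsetAtMostGaps Y s ∧ ∀ j ∈ J, x j ∈ Y} with h𝒩def
  set 𝒩₀ : Set ℕ := {N : ℕ | N ∈ 𝒩 ∧ 12 ≤ γ * N} with h𝒩₀def
  have h𝒩₀inf : 𝒩₀.Infinite := by
    apply (hInf.diff hsmall).mono
    intro N hN
    exact ⟨hN.1, of_not_not hN.2⟩
  have hch : ∀ N : ℕ, ∃ (d : ℝ) (P : Finset (ℕ × ℕ)), N ∈ 𝒩₀ →
      (0 ≤ d ∧ d * N ≤ 6/γ ∧ c₀ * N ≤ (P.card : ℝ) ∧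
        ∀ p ∈ P, 1 ≤ p.1 ∧ p.1 ≤ N ∧ 1 ≤ p.2 ∧ p.2 ≤ N ∧ p.1 ≠ p.2 ∧
          nid (x p.1 - x p.2) = d) := by
    intro N
    by_cases hN : N ∈ 𝒩₀
    · obtain ⟨J, Y, hJ1, hJ2, hY1, hY2, hY3, hJY⟩ := hN.1
      obtain ⟨d, P, h1, h2, h3, h4⟩ :=
        core x s K γ hK hγ N hN.2 J Y hJ1 hJ2 hY1 hY2 hY3 hJY
      exact ⟨d, P, fun _ => ⟨h1, h2, h3, h4⟩⟩
    · exact ⟨0, ∅, fun hcon => absurd hcon hN⟩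
  choose d P hdP using hch
  by_cases hS0 : {N : ℕ | N ∈ 𝒩₀ ∧ d N = 0}.Infinite
  · -- infinitely many scales with exact coincidences
    apply no_freq (hPPC 0 le_rfl) (show (2:ℝ)*0 < c₀ by simpa using hc₀)
    apply hS0.mono
    intro N hN
    obtain ⟨hN₀, hd0⟩ := hN
    obtain ⟨h1, h2, h3, h4⟩ := hdP N hN₀
    have hNR : (0:ℝ) < N := by exact_mod_cast hNposs N hN₀.2
    have hcount : c₀ * N ≤ (pairCount x 0 N : ℝ) := by
      refine le_trans h3 ?_
      exact_mod_cast pairCount_zero_lb x (fun p hp => by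
        have := h4 p hp
        rw [hd0] at this
        exact this)
    simp only [Set.mem_setOf_eq]
    rw [le_div_iff₀ hNR]
    exact hcount
  · have hS1 : {N : ℕ | N ∈ 𝒩₀ ∧ d N ≠ 0}.Infinite := by
      intro hfin
      apply h𝒩₀inf
      apply Set.Finite.subset ((Set.not_infinite.1 hS0).union hfin)
      intro N hN
      by_cases hd : d N = 0
      · exact Or.inl ⟨hN, hd⟩
      · exact Or.inr ⟨hN, hd⟩
    set k : ℕ → ℕ := fun N => ⌈(d N * N)/δ⌉₊ - 1 with hkdef
    set Kmax : ℕ := ⌈(6/γ)/δ⌉₊ with hKmaxdef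
    have hkle : ∀ N, N ∈ 𝒩₀ → d N ≠ 0 → k N ≤ Kmax := by
      intro N hN₀ hdne
      obtain ⟨h1, h2, h3, h4⟩ := hdP N hN₀
      have hle : ⌈(d N * N)/δ⌉₊ ≤ ⌈(6/γ)/δ⌉₊ := Nat.ceil_le_ceil (by gcongr)
      simp only [hkdef, hKmaxdef]
      omega
    have hexk : ∃ j, {N : ℕ | (N ∈ 𝒩₀ ∧ d N ≠ 0) ∧ k N = j}.Infinite := by
      by_contra hcon
      push_neg at hcon
      have hfin : (⋃ j ∈ Finset.range (Kmax+1),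
          {N : ℕ | (N ∈ 𝒩₀ ∧ d N ≠ 0) ∧ k N = j}).Finite :=
        Set.Finite.biUnion (Finset.range (Kmax+1)).finite_toSet
          (fun j _ => (hcon j))
      apply hS1
      apply hfin.subset
      intro N hN
      rw [Set.mem_iUnion₂]
      exact ⟨k N, Finset.mem_range.2 (Nat.lt_succ_of_le (hkle N hN.1 hN.2)),
        ⟨hN, rfl⟩⟩
    obtain ⟨j, hj⟩ := hexk
    have hα := hPPC ((j:ℝ)*δ) (by positivity)
    have hβ := hPPC (((j:ℝ)+1)*δ) (by positivity)
    have hdiff := hβ.sub hα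
    have hL : 2*(((j:ℝ)+1)*δ) - 2*((j:ℝ)*δ) = c₀/2 := by rw [hδdef]; ring
    rw [hL] at hdiff
    apply no_freq hdiff (show c₀/2 < c₀ by linarith)
    apply hj.mono
    intro N hN
    obtain ⟨⟨hN₀, hdne⟩, hkN⟩ := hN
    obtain ⟨h1, h2, h3, h4⟩ := hdP N hN₀
    have hNpos : 0 < N := hNposs N hN₀.2
    have hNR : (0:ℝ) < N := by exact_mod_cast hNpos
    have hdpos : 0 < d N := lt_of_le_of_ne h1 (Ne.symm hdne)
    have hceil1 : 1 ≤ ⌈(d N * N)/δ⌉₊ :=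
      Nat.one_le_ceil_iff.2 (by positivity)
    have hk1 : (k N : ℝ) + 1 = (⌈(d N * N)/δ⌉₊ : ℝ) := by
      rw [hkdef]
      push_cast [Nat.cast_sub hceil1]
      ring
    have hlow : (j:ℝ)*δ < d N * N := by
      rw [← hkN]
      have hc := Nat.ceil_lt_add_one (show (0:ℝ) ≤ (d N * N)/δ by positivity)
      have hkR : (k N : ℝ) < (d N * N)/δ := by linarith [hk1]
      calc (k N:ℝ)*δ < ((d N * N)/δ)*δ := mul_lt_mul_of_pos_right hkR hδ
        _ = d N * N := div_mul_cancel₀ _ (ne_of_gt hδ)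
    have hup : d N * N ≤ ((j:ℝ)+1)*δ := by
      rw [← hkN]
      have hc := Nat.le_ceil ((d N * N)/δ)
      calc d N * N = ((d N * N)/δ)*δ := (div_mul_cancel₀ _ (ne_of_gt hδ)).symm
        _ ≤ ((k N:ℝ)+1)*δ := by
            apply mul_le_mul_of_nonneg_right _ hδ.le
            rw [hk1]
            exact hc
    have hjump := pairCount_jump x hNpos hlow hup h4
    simp only [Set.mem_setOf_eq]
    have hcast : (pairCount x ((j:ℝ)*δ) N : ℝ) + (P N).card ≤
        (pairCount x (((j:ℝ)+1)*δ) N : ℝ) := by exact_mod_cast hjump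
    rw [div_sub_div_same, le_div_iff₀ hNR]
    linarith [h3, hcast]
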